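/- Let f be holomorphic on a neighborhood of the closed disc of radius 3^k with |f(z)| ≥ 1 on the annulus {3 ≤ |z| ≤ 3^k}, and let W be the number of zeros of f in the open disc of radius 3. Then ∫_{3T} ln|f(ζ)| dm(ζ) = ∫_{3^k T} ln|f(ζ)| dm(ζ) − (k−1)·W·ln 3. -/

import Mathlib

open Complex Metric Set MeasureTheory intervalIntegral Real

/-- The average of a real-valued function over the circle of radius `r` centered at `0`,
with respect to normalized Lebesgue measure of total mass 1. -/
noncomputable def circAvg (r : ℝ) (u : ℂ → ℝ) : ℝ :=
  (2 * Real.pi)⁻¹ * ∫ θ in (0:ℝ)..(2 * Real.pi), u (circleMap 0 r θ)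


lemma circAvg_congr {r : ℝ} {u v : ℂ → ℝ}
    (h : ∀ θ : ℝ, u (circleMap 0 r θ) = v (circleMap 0 r θ)) : circAvg r u = circAvg r v := by
  unfold circAvg
  congr 1
  exact intervalIntegral.integral_congr fun θ _ => h θ

lemma cont_log_abs_comp {u : ℝ → ℂ} (hu : Continuous u) (hne : ∀ θ, u θ ≠ 0) :
    Continuous fun θ => Real.log (‖u θ‖) := by
  rw [continuous_iff_continuousAt]
  intro θ
  exact (Real.continuousAt_log (by simp [hne θ])).comp
    (continuous_norm.continuousAt.comp hu.continuousAt)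

/-- Mean value property for the real part of a holomorphic function. -/
lemma mvl {r : ℝ} (hr : 0 < r) {h : ℂ → ℂ} {s : Set ℂ} (hs : IsOpen s)
    (hball : Metric.closedBall (0:ℂ) r ⊆ s) (hd : ∀ z ∈ s, DifferentiableAt ℂ h z) :
    circAvg r (fun z => (h z).re) = (h 0).re := by
  have hmem : ∀ θ : ℝ, circleMap 0 r θ ∈ Metric.closedBall (0:ℂ) r := fun θ =>
    circleMap_mem_closedBall 0 hr.le θ
  have hcont : Continuous fun θ => h (circleMap 0 r θ) := by
    rw [continuous_iff_continuousAt]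
    intro θ
    exact (hd _ (hball (hmem θ))).continuousAt.comp (continuous_circleMap 0 r).continuousAt
  have key := circleIntegral_sub_inv_smul_of_differentiable_on_off_countable
      (R := r) (c := 0) (w := 0) (f := h) (s := ∅) countable_empty
      (mem_ball_self hr)
      (fun z hz => (hd z (hball hz)).continuousAt.continuousWithinAt)
      (fun z hz => hd z (hball (ball_subset_closedBall hz.1)))
  have h1 : (∮ z in C(0, r), (z - 0)⁻¹ • h z)
      = ∫ θ in (0:ℝ)..2*Real.pi, Complex.I * h (circleMap 0 r θ) := by
    simp only [circleIntegral, deriv_circleMap, smul_eq_mul]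
    refine intervalIntegral.integral_congr fun θ _ => ?_
    have hne : circleMap 0 r θ ≠ 0 := by
      simpa using circleMap_ne_center (c := (0:ℂ)) hr.ne' (θ := θ)
    field_simp
    ring
  have h3 : (∫ θ in (0:ℝ)..2*Real.pi, h (circleMap 0 r θ)) = ((2*Real.pi : ℝ) : ℂ) * h 0 := by
    apply mul_left_cancel₀ Complex.I_ne_zero
    rw [← intervalIntegral.integral_const_mul, ← h1, key]
    push_cast
    rw [smul_eq_mul]
    ring
  have hi : IntervalIntegrable (fun θ => h (circleMap 0 r θ)) volume 0 (2*Real.pi) :=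
    hcont.intervalIntegrable _ _
  have h4 : (∫ θ in (0:ℝ)..2*Real.pi, (h (circleMap 0 r θ)).re)
      = ((∫ θ in (0:ℝ)..2*Real.pi, h (circleMap 0 r θ))).re := by
    simpa using Complex.reCLM.intervalIntegral_comp_comm hi
  unfold circAvg
  rw [h4, h3, Complex.re_ofReal_mul]
  have hπ : (2*Real.pi) ≠ 0 := by positivity
  field_simp

lemma circAvg_log_abs_sub {r : ℝ} (hr : 0 < r) {a : ℂ} (ha : ‖a‖ < r) :
    circAvg r (fun z => Real.log (‖z - a‖)) = Real.log r := by
  set c : ℂ := (starRingEnd ℂ) a / (r : ℂ) with hc_def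
  have hrC : (r : ℂ) ≠ 0 := by exact_mod_cast hr.ne'
  have hc : ‖c‖ < 1 := by
    rw [hc_def, norm_div, Complex.norm_conj]
    simp only [Complex.norm_real, Real.norm_eq_abs, abs_of_pos hr]
    exact (div_lt_one hr).2 ha
  set ψ : ℂ → ℂ := fun w => 1 - c * w with hψ_def
  -- ψ does not vanish on the closed unit disc-ish
  have hψne : ∀ w : ℂ, ‖w‖ ≤ 1 → ψ w ≠ 0 := by
    intro w hw h0
    have : c * w = 1 := by
      have h0' : (1:ℂ) - c * w = 0 := h0
      rw [sub_eq_zero] at h0'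
      exact h0'.symm
    have := congrArg (‖·‖) this
    rw [norm_mul] at this
    simp at this
    nlinarith [norm_nonneg w, norm_nonneg c]
  -- pointwise identity
  have hpt : ∀ θ : ℝ, Real.log (‖circleMap 0 r θ - a‖)
      = Real.log r + Real.log (‖ψ (circleMap 0 1 θ)‖) := by
    intro θ
    have he : Complex.exp (θ * Complex.I) * Complex.exp (-(θ * Complex.I)) = 1 := by
      rw [← Complex.exp_add]; simp
    have e1 : circleMap 0 r θ - a
        = Complex.exp (θ * Complex.I) * ((r : ℂ) - a * Complex.exp (-(θ * Complex.I))) := by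
      simp only [circleMap, Complex.ofReal_one, zero_add]
      linear_combination a * he
    have e2 : ‖circleMap 0 r θ - a‖
        = ‖(r : ℂ) - a * Complex.exp (-(θ * Complex.I))‖ := by
      rw [e1, norm_mul, Complex.norm_exp_ofReal_mul_I, one_mul]
    have e3 : (starRingEnd ℂ) ((r : ℂ) - a * Complex.exp (-(θ * Complex.I)))
        = (r : ℂ) - (starRingEnd ℂ) a * Complex.exp (θ * Complex.I) := by
      rw [map_sub, map_mul, Complex.conj_ofReal, ← Complex.exp_conj]
      simp
    have e4 : (r : ℂ) - (starRingEnd ℂ) a * Complex.exp (θ * Complex.I)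
        = (r : ℂ) * ψ (Complex.exp (θ * Complex.I)) := by
      rw [hψ_def, hc_def]; field_simp
    have e5 : circleMap 0 1 θ = Complex.exp (θ * Complex.I) := by
      simp [circleMap]
    have habs : ‖circleMap 0 r θ - a‖
        = r * ‖ψ (circleMap 0 1 θ)‖ := by
      rw [e2, ← Complex.norm_conj, e3, e4, norm_mul, e5]
      simp [abs_of_pos hr]
    rw [habs, Real.log_mul hr.ne' ?_]
    · exact norm_ne_zero_iff.2 (hψne _ (by rw [e5, Complex.norm_exp_ofReal_mul_I]))
  -- average of log |ψ| over unit circle is 0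
  have havg : circAvg 1 (fun w => Real.log (‖ψ w‖)) = 0 := by
    set R' : ℝ := 2 / (1 + ‖c‖) with hR'
    have hc0 : (0:ℝ) ≤ ‖c‖ := norm_nonneg c
    have hR1 : 1 < R' := by rw [hR']; rw [lt_div_iff₀ (by linarith)]; linarith
    have hkey : ∀ w ∈ Metric.ball (0:ℂ) R', ψ w ∈ Complex.slitPlane := by
      intro w hw
      rw [Metric.mem_ball, dist_zero_right] at hw
      have h1 : ‖c * w‖ < 1 := by
        rw [norm_mul]
        calc ‖c‖ * ‖w‖ ≤ ‖c‖ * R' := by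
              apply mul_le_mul_of_nonneg_left (le_of_lt hw) hc0
          _ = 2 * ‖c‖ / (1 + ‖c‖) := by rw [hR']; ring
          _ < 1 := by rw [div_lt_one (by linarith)]; linarith
      apply Complex.mem_slitPlane_iff.2
      left
      have : (c * w).re ≤ ‖c * w‖ := Complex.re_le_norm _
      simp only [hψ_def, Complex.sub_re, Complex.one_re]
      linarith
    have hd : ∀ w ∈ Metric.ball (0:ℂ) R', DifferentiableAt ℂ (fun w => Complex.log (ψ w)) w := by
      intro w hw
      exact DifferentiableAt.clog (by fun_prop) (hkey w hw)
    have := mvl (by norm_num : (0:ℝ) < 1) Metric.isOpen_ball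
      (Metric.closedBall_subset_ball hR1) hd
    have heq : circAvg 1 (fun w => Real.log (‖ψ w‖))
        = circAvg 1 (fun w => (Complex.log (ψ w)).re) := by
      apply circAvg_congr
      intro θ
      rw [Complex.log_re]
    rw [heq, this, hψ_def]
    simp
  -- put together
  unfold circAvg
  have hint : (∫ θ in (0:ℝ)..(2*Real.pi), Real.log (‖circleMap 0 r θ - a‖))
      = ∫ θ in (0:ℝ)..(2*Real.pi),
        (Real.log r + Real.log (‖ψ (circleMap 0 1 θ)‖)) := by
    exact intervalIntegral.integral_congr fun θ _ => hpt θ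
  rw [hint, intervalIntegral.integral_add (intervalIntegrable_const)
    ((cont_log_abs_comp ?_ ?_).intervalIntegrable _ _)]
  · rw [intervalIntegral.integral_const]
    unfold circAvg at havg
    have hπ : (2*Real.pi) ≠ 0 := by positivity
    have h2 : (∫ θ in (0:ℝ)..(2*Real.pi), Real.log (‖ψ (circleMap 0 1 θ)‖)) = 0 := by
      rcases mul_eq_zero.mp havg with h | h
      · exact absurd h (by positivity)
      · exact h
    rw [h2]
    rw [smul_eq_mul, sub_zero, add_zero]
    field_simp
  · simp only [hψ_def]
    fun_prop
  · intro θ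
    exact hψne _ (by rw [norm_circleMap_zero]; norm_num)

lemma exists_holo_log {ρ : ℝ} (hρ : 0 < ρ) {g : ℂ → ℂ}
    (hg : DifferentiableOn ℂ g (Metric.ball (0:ℂ) ρ))
    (hne : ∀ z ∈ Metric.ball (0:ℂ) ρ, g z ≠ 0) :
    ∃ h : ℂ → ℂ, (∀ z ∈ Metric.ball (0:ℂ) ρ, Complex.exp (h z) = g z) ∧
      ∀ z ∈ Metric.ball (0:ℂ) ρ, DifferentiableAt ℂ h z := by
  set B := Metric.ball (0:ℂ) ρ with hB
  have hBo : IsOpen B := Metric.isOpen_ball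
  have hgd : ∀ z ∈ B, DifferentiableAt ℂ g z := fun z hz =>
    hg.differentiableAt (hBo.mem_nhds hz)
  set Q : ℂ → ℂ := fun z => deriv g z / g z with hQ_def
  have hQc : ContinuousOn Q B := by
    apply ContinuousOn.div
    · exact ((hg.analyticOnNhd hBo).deriv).continuousOn
    · exact hg.continuousOn
    · exact hne
  -- the clamp
  set τ : ℝ → ℝ := fun t => max 0 (min t 1) with hτ_def
  have hτc : Continuous τ := continuous_const.max (continuous_id.min continuous_const)
  have hτ01 : ∀ t, 0 ≤ τ t ∧ τ t ≤ 1 := fun t => ⟨le_max_left _ _, by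
    rw [hτ_def]; simp only [max_le_iff]; exact ⟨by norm_num, min_le_right _ _⟩⟩
  have hτ_eq : ∀ t ∈ Icc (0:ℝ) 1, τ t = t := by
    intro t ht
    rw [hτ_def]
    simp only [min_eq_left ht.2, max_eq_right ht.1]
  have hmem : ∀ (z : ℂ), z ∈ B → ∀ t : ℝ, |t| ≤ 1 → ((t:ℂ) * z) ∈ B := by
    intro z hz t ht
    rw [hB, Metric.mem_ball, dist_zero_right] at *
    calc ‖(t:ℂ) * z‖ = |t| * ‖z‖ := by
          rw [norm_mul, Complex.norm_real, Real.norm_eq_abs]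
      _ ≤ 1 * ‖z‖ := by apply mul_le_mul_of_nonneg_right ht (norm_nonneg z)
      _ < ρ := by rwa [one_mul]
  set h : ℂ → ℂ := fun z => Complex.log (g 0) + ∫ t in (0:ℝ)..1, (z * Q ((τ t : ℝ) * z)) with hh
  have h0B : (0:ℂ) ∈ B := Metric.mem_ball_self hρ
  -- continuity of h on B
  have hcont : ContinuousOn h B := by
    rw [continuousOn_iff_continuous_restrict]
    apply Continuous.add continuous_const
    have : Continuous (Function.uncurry fun (x : B) (t : ℝ) => ((x:ℂ) * Q ((τ t : ℝ) * (x:ℂ)))) := by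
      apply Continuous.mul (continuous_subtype_val.comp continuous_fst)
      apply hQc.comp_continuous
      · exact (Complex.continuous_ofReal.comp (hτc.comp continuous_snd)).mul
          (continuous_subtype_val.comp continuous_fst)
      · rintro ⟨⟨z, hz⟩, t⟩
        exact hmem z hz (τ t) (by rw [_root_.abs_of_nonneg (hτ01 t).1]; exact (hτ01 t).2)
    exact continuous_parametric_intervalIntegral_of_continuous' this 0 1
  -- exp (h z) = g z
  have hexp : ∀ z ∈ B, Complex.exp (h z) = g z := by
    intro z hz
    rcases eq_or_ne z 0 with rfl | hz0
    · have : h 0 = Complex.log (g 0) := by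
        rw [hh]; simp
      rw [this, Complex.exp_log (hne 0 h0B)]
    · -- the unclamped integrand
      set q : ℝ → ℂ := fun t => z * Q ((t:ℂ) * z) with hq_def
      have hzρ : ‖z‖ < ρ := by rwa [hB, Metric.mem_ball, dist_zero_right] at hz
      have hz0' : 0 < ‖z‖ := by
        simpa [norm_pos_iff] using hz0
      set M : ℝ := ρ / ‖z‖ with hM
      have hM1 : 1 < M := by
        rw [hM, lt_div_iff₀ hz0']; simpa using hzρ
      set I' : Set ℝ := Ioo (-M) M with hI'
      have hI'o : IsOpen I' := isOpen_Ioo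
      have hI'mem : ∀ t ∈ I', ((t:ℂ) * z) ∈ B := by
        intro t ht
        rw [hB, Metric.mem_ball, dist_zero_right]
        rw [hI', mem_Ioo] at ht
        have : |t| < M := abs_lt.2 ⟨ht.1, ht.2⟩
        calc ‖(t:ℂ) * z‖ = |t| * ‖z‖ := by
              rw [norm_mul, Complex.norm_real, Real.norm_eq_abs]
          _ < M * ‖z‖ := by exact mul_lt_mul_of_pos_right this hz0'
          _ = ρ := by rw [hM]; field_simp
      have hIcc : Icc (0:ℝ) 1 ⊆ I' := by
        intro t ht
        rw [hI', mem_Ioo]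
        constructor <;> [linarith [ht.1, hM1]; linarith [ht.2, hM1]]
      have hqc : ContinuousOn q I' := by
        apply ContinuousOn.mul continuousOn_const
        apply hQc.comp
        · exact (Complex.continuous_ofReal.continuousOn.mul continuousOn_const)
        · exact hI'mem
      -- FTC derivative of A
      set A : ℝ → ℂ := fun t => ∫ s in (0:ℝ)..t, q s with hA
      have hA' : ∀ t ∈ I', HasDerivAt A (q t) t := by
        intro t ht
        apply intervalIntegral.integral_hasDerivAt_right
        · apply (hqc.mono _).intervalIntegrable
          exact (Set.ordConnected_Ioo).uIcc_subset (hIcc ⟨le_refl 0, by norm_num⟩) ht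
        · exact ContinuousOn.stronglyMeasurableAtFilter hI'o hqc t ht
        · exact hqc.continuousAt (hI'o.mem_nhds ht)
      set C : ℂ := Complex.log (g 0) with hC
      set u : ℝ → ℂ := fun t => Complex.exp (C + A t) * (g ((t:ℂ) * z))⁻¹ with hu
      have hu' : ∀ t ∈ I', HasDerivAt u 0 t := by
        intro t ht
        have htB : ((t:ℂ) * z) ∈ B := hI'mem t ht
        have hgt : g ((t:ℂ) * z) ≠ 0 := hne _ htB
        have hE : HasDerivAt (fun t => Complex.exp (C + A t)) (Complex.exp (C + A t) * q t) t := by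
          simpa using ((hasDerivAt_const t C).add (hA' t ht)).cexp
        have hin : HasDerivAt (fun w : ℂ => g (w * z)) (deriv g ((t:ℂ) * z) * z) (t:ℂ) := by
          have h1 : HasDerivAt g (deriv g ((t:ℂ) * z)) ((t:ℂ) * z) := (hgd _ htB).hasDerivAt
          exact h1.comp (t:ℂ) (by simpa using (hasDerivAt_id ((t:ℂ))).mul_const z)
        have hgz : HasDerivAt (fun t : ℝ => g ((t:ℂ) * z)) (deriv g ((t:ℂ) * z) * z) t :=
          hin.comp_ofReal
        have hInv : HasDerivAt (fun t : ℝ => (g ((t:ℂ) * z))⁻¹)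
            (-(deriv g ((t:ℂ) * z) * z) / (g ((t:ℂ) * z))^2) t :=
          (HasDerivAt.inv hin (by exact hgt)).comp_ofReal
        have := hE.mul hInv
        convert this using 1
        · rfl
        · rfl
        rw [hq_def, hQ_def]
        field_simp
        ring
      have hu_cont : ContinuousOn u (Icc 0 1) := fun t ht =>
        ((hu' t (hIcc ht)).continuousAt).continuousWithinAt
      have hconst := constant_of_has_deriv_right_zero hu_cont
        (fun t ht => ((hu' t (hIcc (Ico_subset_Icc_self ht))).hasDerivWithinAt))
      have h10 : u 1 = u 0 := hconst 1 (by norm_num)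
      have hu0 : u 0 = 1 := by
        rw [hu]
        simp only [Complex.ofReal_zero, zero_mul, hA]
        rw [intervalIntegral.integral_same, add_zero, hC, Complex.exp_log (hne 0 h0B)]
        exact mul_inv_cancel₀ (hne 0 h0B)
      have hhA : h z = C + A 1 := by
        show Complex.log (g 0) + (∫ t in (0:ℝ)..1, z * Q ((τ t : ℝ) * z))
          = Complex.log (g 0) + ∫ s in (0:ℝ)..1, q s
        congr 1
        apply intervalIntegral.integral_congr
        intro t ht
        rw [uIcc_of_le (by norm_num : (0:ℝ) ≤ 1)] at ht
        show z * Q ((τ t : ℝ) * z) = q t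
        rw [hτ_eq t ht]
      rw [hhA]
      have hone : u 1 = 1 := h10.trans hu0
      have this2 : Complex.exp (C + A 1) * (g z)⁻¹ = 1 := by
        simpa [hu] using hone
      have hgz : g z ≠ 0 := hne z hz
      exact (mul_inv_eq_one₀ hgz).mp this2
  refine ⟨h, hexp, ?_⟩
  -- differentiability
  intro z0 hz0
  have hgz0 : g z0 ≠ 0 := hne z0 hz0
  set Hl : ℂ → ℂ := fun z => Complex.log (g z0) + Complex.log (g z / g z0) with hHl
  have hHld : DifferentiableAt ℂ Hl z0 := by
    apply DifferentiableAt.add (differentiableAt_const _)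
    apply DifferentiableAt.clog ((hgd z0 hz0).div_const (g z0))
    rw [div_self hgz0]
    exact Complex.one_mem_slitPlane
  -- eventually, things are nice
  have hVB : ∀ᶠ z in nhds z0, z ∈ B := hBo.mem_nhds hz0
  have hVslit : ∀ᶠ z in nhds z0, g z / g z0 ∈ Complex.slitPlane := by
    have hcg : ContinuousAt (fun z => g z / g z0) z0 := ((hgd z0 hz0).continuousAt).div_const _
    have h1 : g z0 / g z0 ∈ Complex.slitPlane := by
      rw [div_self hgz0]; exact Complex.one_mem_slitPlane
    exact hcg.eventually_mem (Complex.isOpen_slitPlane.mem_nhds h1)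
  have hexp1 : ∀ᶠ z in nhds z0, Complex.exp (h z - Hl z) = 1 := by
    filter_upwards [hVB, hVslit] with z hzB _
    rw [Complex.exp_sub, hexp z hzB, hHl, Complex.exp_add,
      Complex.exp_log hgz0, Complex.exp_log (div_ne_zero (hne z hzB) hgz0)]
    field_simp
    try exact div_self (hne z hzB)
  set d : ℂ → ℂ := fun z => h z - Hl z with hd
  have hdc : ContinuousAt d z0 :=
    ((hcont.continuousAt (hBo.mem_nhds hz0)).sub hHld.continuousAt)
  have hsmall : ∀ᶠ z in nhds z0, ‖d z - d z0‖ < 2 * Real.pi := by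
    have h2π : (0:ℝ) < 2 * Real.pi := by positivity
    have := hdc (Metric.ball_mem_nhds (d z0) h2π)
    filter_upwards [this] with z hz
    simpa [Metric.mem_ball, dist_eq_norm] using hz
  have hev : ∀ᶠ z in nhds z0, h z = Hl z + d z0 := by
    have hz0self : Complex.exp (d z0) = 1 := hexp1.self_of_nhds
    filter_upwards [hexp1, hsmall] with z hz hz'
    have : Complex.exp (d z - d z0) = 1 := by
      rw [Complex.exp_sub, hz, hz0self]; norm_num
    obtain ⟨n, hn⟩ := Complex.exp_eq_one_iff.mp this
    have hnorm : ‖d z - d z0‖ = |(n:ℝ)| * (2 * Real.pi) := by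
      rw [hn, norm_mul]
      congr 1
      · simp
      · simp [Complex.norm_real, Complex.norm_I,
          _root_.abs_of_pos Real.pi_pos]
    have hn0 : n = 0 := by
      by_contra hn0
      have h1 : (1:ℝ) ≤ |(n:ℝ)| := by
        rw [← Int.cast_abs]
        exact_mod_cast Int.one_le_abs hn0
      rw [hnorm] at hz'
      nlinarith [Real.pi_pos]
    rw [hn0] at hn
    simp only [Int.cast_zero, zero_mul] at hn
    have hdz : d z = d z0 := by
      have := sub_eq_zero.mp hn
      exact this
    have h2 : h z - Hl z = d z0 := hdz
    rw [← h2]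
    ring
  have hdiff : DifferentiableAt ℂ (fun z => Hl z + d z0) z0 := hHld.add_const _
  exact (Filter.EventuallyEq.differentiableAt_iff hev).mpr hdiff

lemma circAvg_split {r : ℝ} {u v w : ℂ → ℝ}
    (hpt : ∀ θ : ℝ, u (circleMap 0 r θ) = v (circleMap 0 r θ) + w (circleMap 0 r θ))
    (hv : Continuous fun θ => v (circleMap 0 r θ))
    (hw : Continuous fun θ => w (circleMap 0 r θ)) :
    circAvg r u = circAvg r v + circAvg r w := by
  unfold circAvg
  rw [intervalIntegral.integral_congr (fun θ _ => hpt θ),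
    intervalIntegral.integral_add (hv.intervalIntegrable _ _) (hw.intervalIntegrable _ _)]
  ring

lemma circAvg_prod {r : ℝ} (hr : 3 ≤ r) (Z : Multiset ℂ)
    (hZ : ∀ a ∈ Z, a ∈ Metric.ball (0:ℂ) 3)
    {G : ℂ → ℂ} (hGc : Continuous fun θ => G (circleMap 0 r θ))
    (hGne : ∀ θ : ℝ, G (circleMap 0 r θ) ≠ 0) :
    circAvg r (fun z => Real.log (‖(Z.map (fun a => z - a)).prod * G z‖))
      = (Multiset.card Z) * Real.log r + circAvg r (fun z => Real.log (‖G z‖)) := by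
  have hr0 : (0:ℝ) < r := by linarith
  have hcirc_ne : ∀ (θ : ℝ) (b : ℂ), b ∈ Metric.ball (0:ℂ) 3 → circleMap 0 r θ - b ≠ 0 := by
    intro θ b hb hzero
    rw [sub_eq_zero] at hzero
    rw [Metric.mem_ball, dist_zero_right, ← hzero] at hb
    have h1 : ‖circleMap 0 r θ‖ = r := by
      rw [norm_circleMap_zero, abs_of_pos hr0]
    rw [h1] at hb
    linarith
  induction Z using Multiset.induction_on with
  | empty =>
    simp only [Multiset.map_zero, Multiset.prod_zero, one_mul, Multiset.card_zero,
      Nat.cast_zero, zero_mul, zero_add]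
  | cons a S ih =>
    have haZ : a ∈ Metric.ball (0:ℂ) 3 := hZ a (Multiset.mem_cons_self a S)
    have hS : ∀ b ∈ S, b ∈ Metric.ball (0:ℂ) 3 := fun b hb => hZ b (Multiset.mem_cons_of_mem hb)
    have hprodc : Continuous fun θ => ((S.map (fun b => circleMap 0 r θ - b)).prod) := by
      have : ∀ θ, ((S.map (fun b => circleMap 0 r θ - b)).prod)
          = ((S.map (fun b => fun θ : ℝ => circleMap 0 r θ - b)).map (fun F => F θ)).prod := by
        intro θ
        rw [Multiset.map_map]
        rfl
      simp only [this]
      apply continuous_multiset_prod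
      intro F hF
      rw [Multiset.mem_map] at hF
      obtain ⟨b, _, rfl⟩ := hF
      exact (continuous_circleMap 0 r).sub continuous_const
    have hprodne : ∀ θ, ((S.map (fun b => circleMap 0 r θ - b)).prod) ≠ 0 := by
      intro θ
      apply Multiset.prod_ne_zero
      intro h0
      rw [Multiset.mem_map] at h0
      obtain ⟨b, hb, hb0⟩ := h0
      exact hcirc_ne θ b (hS b hb) hb0
    have hsplit := circAvg_split (r := r)
      (u := fun z => Real.log (‖((a ::ₘ S).map (fun b => z - b)).prod * G z‖))
      (v := fun z => Real.log (‖z - a‖))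
      (w := fun z => Real.log (‖(S.map (fun b => z - b)).prod * G z‖))
      (fun θ => by
        show Real.log (‖((a ::ₘ S).map (fun b => circleMap 0 r θ - b)).prod
            * G (circleMap 0 r θ)‖)
          = Real.log (‖circleMap 0 r θ - a‖)
            + Real.log (‖(S.map (fun b => circleMap 0 r θ - b)).prod
                * G (circleMap 0 r θ)‖)
        rw [Multiset.map_cons, Multiset.prod_cons, mul_assoc, norm_mul, Real.log_mul]
        · exact norm_ne_zero_iff.2 (hcirc_ne θ a haZ)
        · exact norm_ne_zero_iff.2 (mul_ne_zero (hprodne θ) (hGne θ)))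
      (cont_log_abs_comp ((continuous_circleMap 0 r).sub continuous_const)
        (fun θ => hcirc_ne θ a haZ))
      (cont_log_abs_comp (hprodc.mul hGc) (fun θ => mul_ne_zero (hprodne θ) (hGne θ)))
    rw [hsplit, circAvg_log_abs_sub hr0 (lt_of_lt_of_le (by simpa [Metric.mem_ball,
      dist_zero_right] using haZ) hr), ih hS, Multiset.card_cons]
    push_cast
    ring

/-- Lemma 4.3 (second identity): with `f` holomorphic on a neighborhood of the closed disc of
radius `3^k`, `|f| ≥ 1` on the annulus `3 ≤ |z| ≤ 3^k`, and `W` the number of zeros of `f` in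
the open disc of radius 3 (with multiplicity, recorded via the factorization `f = ∏(z-a) * g`
with `g` nonvanishing), one has
`∫_{3𝕋} ln|f| dm = ∫_{3^k 𝕋} ln|f| dm − (k−1) W ln 3`. -/
theorem circle_log_avg_eq_sub (k : ℕ) (hk : 2 ≤ k) (f g : ℂ → ℂ) (U : Set ℂ) (hU : IsOpen U)
    (hUb : Metric.closedBall (0:ℂ) (3 ^ k) ⊆ U)
    (Z : Multiset ℂ) (hZ : ∀ a ∈ Z, a ∈ Metric.ball (0:ℂ) 3)
    (hg : DifferentiableOn ℂ g U) (hgne : ∀ z ∈ U, g z ≠ 0)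
    (hfact : ∀ z ∈ U, f z = (Z.map (fun a => z - a)).prod * g z)
    (hK : ∀ z : ℂ, 3 ≤ ‖z‖ → ‖z‖ ≤ 3 ^ k → 1 ≤ ‖f z‖)
    (W : ℕ) (hW : W = Multiset.card Z) :
    circAvg 3 (fun ζ => Real.log (‖f ζ‖)) =
      circAvg (3 ^ k) (fun ζ => Real.log (‖f ζ‖))
        - (k - 1 : ℝ) * W * Real.log 3 := by
  have h3k : (3:ℝ) ≤ 3 ^ k := by
    calc (3:ℝ) = 3 ^ 1 := (pow_one 3).symm
    _ ≤ 3 ^ k := pow_le_pow_right₀ (by norm_num) (le_trans (by norm_num) hk)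
  have h3k0 : (0:ℝ) < 3 ^ k := by positivity
  -- thickening
  obtain ⟨δ, hδ0, hδ⟩ := (isCompact_closedBall (0:ℂ) (3 ^ k)).exists_cthickening_subset_open hU hUb
  set ρ : ℝ := δ + 3 ^ k with hρ_def
  have hρ0 : 0 < ρ := by positivity
  have hballU : Metric.ball (0:ℂ) ρ ⊆ U := by
    rw [hρ_def]
    rw [cthickening_closedBall hδ0.le h3k0.le] at hδ
    exact (Metric.ball_subset_closedBall).trans hδ
  have hρgt : (3:ℝ) ^ k < ρ := by rw [hρ_def]; linarith
  -- holomorphic logarithm of g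
  obtain ⟨h, hexp, hdiff⟩ := exists_holo_log hρ0 (hg.mono hballU)
    (fun z hz => hgne z (hballU hz))
  have hre : ∀ z ∈ Metric.ball (0:ℂ) ρ, Real.log (‖g z‖) = (h z).re := by
    intro z hz
    rw [← hexp z hz, Complex.norm_exp, Real.log_exp]
  -- circle points
  have hcircmem : ∀ r : ℝ, 0 < r → r ≤ 3 ^ k → ∀ θ : ℝ,
      circleMap 0 r θ ∈ Metric.ball (0:ℂ) ρ := by
    intro r hr hrle θ
    rw [Metric.mem_ball, dist_zero_right, norm_circleMap_zero,
      abs_of_pos hr]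
    linarith
  have hcircU : ∀ r : ℝ, 0 < r → r ≤ 3 ^ k → ∀ θ : ℝ, circleMap 0 r θ ∈ U :=
    fun r hr hrle θ => hballU (hcircmem r hr hrle θ)
  -- mean value of log |g|
  have hmv : ∀ r : ℝ, 0 < r → r ≤ 3 ^ k →
      circAvg r (fun z => Real.log (‖g z‖)) = (h 0).re := by
    intro r hr hrle
    have e1 : circAvg r (fun z => Real.log (‖g z‖))
        = circAvg r (fun z => (h z).re) :=
      circAvg_congr fun θ => hre _ (hcircmem r hr hrle θ)
    rw [e1]
    exact mvl hr Metric.isOpen_ball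
      (Metric.closedBall_subset_ball (lt_of_le_of_lt hrle hρgt)) hdiff
  -- reduction of f to the product, for each radius
  have hmain : ∀ r : ℝ, 0 < r → 3 ≤ r → r ≤ 3 ^ k →
      circAvg r (fun ζ => Real.log (‖f ζ‖))
        = (Multiset.card Z) * Real.log r + (h 0).re := by
    intro r hr hr3 hrle
    have hGc : Continuous fun θ => g (circleMap 0 r θ) := by
      rw [continuous_iff_continuousAt]
      intro θ
      exact ((hg.differentiableAt (hU.mem_nhds (hcircU r hr hrle θ))).continuousAt).comp
        (continuous_circleMap 0 r).continuousAt
    have hGne : ∀ θ : ℝ, g (circleMap 0 r θ) ≠ 0 := fun θ => hgne _ (hcircU r hr hrle θ)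
    have e0 : circAvg r (fun ζ => Real.log (‖f ζ‖))
        = circAvg r (fun z => Real.log (‖(Z.map (fun a => z - a)).prod * g z‖)) :=
      circAvg_congr fun θ => by rw [hfact _ (hcircU r hr hrle θ)]
    rw [e0, circAvg_prod hr3 Z hZ hGc hGne, hmv r hr hrle]
  have e3 := hmain 3 (by norm_num) le_rfl h3k
  have e3k := hmain (3 ^ k) h3k0 h3k le_rfl
  rw [e3, e3k, hW, Real.log_pow]
  push_cast
  ring
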